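/- For any symmetric matrices σ, p ∈ S^d and the Tresca-type constraint set K defined via the eigenvalues of σ, the supremum sup_{σ ∈ K} σ : p equals the supremum over real numbers σ_1,…,σ_d with max_{i,j}|σ_i − σ_j| ≤ σ_0 of Σ_i p_i σ_i, where p_1,…,p_d are the eigenvalues of p. In particular, the support function of K can be computed by simultaneously diagonalizing and pairing eigenvalues. -/

import Mathlib

open Matrix

section TrescaAux

variable {n : ℕ}

private lemma tresca_diag_real (f : Fin n → ℝ) :
    diagonal (RCLike.ofReal ∘ f) = diagonal f := by
  rw [RCLike.ofReal_real_eq_id]; rfl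

private lemma tresca_eig_conj_diag_mem (U : Matrix.unitaryGroup (Fin n) ℝ) (f : Fin n → ℝ)
    (hσ : ((U : Matrix (Fin n) (Fin n) ℝ) * diagonal f *
      star (U : Matrix (Fin n) (Fin n) ℝ)).IsHermitian) (i : Fin n) :
    ∃ k, hσ.eigenvalues i = f k := by
  have h2 : ((U : Matrix (Fin n) (Fin n) ℝ) * diagonal f * star (U : Matrix (Fin n) (Fin n) ℝ))
      = (Unitary.toUnits U : Matrix (Fin n) (Fin n) ℝ) * diagonal f
        * ((Unitary.toUnits U)⁻¹ : Matrix.GeneralLinearGroup (Fin n) ℝ) := rfl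
  suffices h : ∀ x : ℝ, x ∈ spectrum ℝ ((U : Matrix (Fin n) (Fin n) ℝ) * diagonal f
      * star (U : Matrix (Fin n) (Fin n) ℝ)) → ∃ k, x = f k from
    h _ (hσ.eigenvalues_mem_spectrum_real i)
  intro x hx
  rw [h2, spectrum.units_conjugate, spectrum_diagonal] at hx
  obtain ⟨k, hk⟩ := hx
  exact ⟨k, hk.symm⟩

private lemma tresca_trace_conj_diag (p : Matrix (Fin n) (Fin n) ℝ) (hp : p.IsHermitian)
    (s : Fin n → ℝ) :
    (((hp.eigenvectorUnitary : Matrix (Fin n) (Fin n) ℝ) * diagonal s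
        * star (hp.eigenvectorUnitary : Matrix (Fin n) (Fin n) ℝ)) * p).trace
      = ∑ i, hp.eigenvalues i * s i := by
  set U := (hp.eigenvectorUnitary : Matrix (Fin n) (Fin n) ℝ) with hU
  have key : star U * p * U = diagonal hp.eigenvalues := by
    rw [hU, ← Unitary.conjStarAlgAut_star_apply (S := ℝ),
      hp.conjStarAlgAut_star_eigenvectorUnitary, tresca_diag_real]
  calc (U * diagonal s * star U * p).trace
      = ((star U * p) * (U * diagonal s)).trace := by
        rw [trace_mul_comm (star U * p)]; rw [Matrix.mul_assoc, Matrix.mul_assoc]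
    _ = ((star U * p * U) * diagonal s).trace := by
        rw [Matrix.mul_assoc (star U * p), Matrix.mul_assoc (star U)]
    _ = (diagonal hp.eigenvalues * diagonal s).trace := by rw [key]
    _ = ∑ i, hp.eigenvalues i * s i := by
        rw [diagonal_mul_diagonal, trace_diagonal]

private lemma tresca_left_to_right (σ0 : ℝ) (p σ : Matrix (Fin n) (Fin n) ℝ)
    (hp : p.IsHermitian) (hσ : σ.IsHermitian)
    (hb : ∀ i j, |hσ.eigenvalues i - hσ.eigenvalues j| ≤ σ0) :
    ∃ s : Fin n → ℝ, (∀ i j, |s i - s j| ≤ σ0) ∧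
      (σ * p).trace = ∑ i, hp.eigenvalues i * s i := by
  set U := (hp.eigenvectorUnitary : Matrix (Fin n) (Fin n) ℝ) with hU
  set V := (hσ.eigenvectorUnitary : Matrix (Fin n) (Fin n) ℝ) with hV
  set e := hσ.eigenvalues with he
  set W := star U * V with hW
  have hUU : star U * U = 1 := Matrix.mem_unitaryGroup_iff'.mp hp.eigenvectorUnitary.2
  have hUU' : U * star U = 1 := Matrix.mem_unitaryGroup_iff.mp hp.eigenvectorUnitary.2
  have hVV : V * star V = 1 := Matrix.mem_unitaryGroup_iff.mp hσ.eigenvectorUnitary.2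
  have hWW : W * star W = 1 := by
    rw [hW, StarMul.star_mul, star_star]
    calc star U * V * (star V * U) = star U * (V * star V) * U := by
          rw [Matrix.mul_assoc, Matrix.mul_assoc, Matrix.mul_assoc]
      _ = 1 := by rw [hVV, Matrix.mul_one, hUU]
  set M := star U * σ * U with hM
  have hMdec : M = W * diagonal e * star W := by
    rw [hM, hW, StarMul.star_mul, star_star]
    conv_lhs => rw [hσ.spectral_theorem, Unitary.conjStarAlgAut_apply, ← hV, tresca_diag_real, ← he]
    noncomm_ring
  have hs : ∀ j, M j j = ∑ l, (W j l)^2 * e l := by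
    intro j
    rw [hMdec, Matrix.mul_apply]
    congr 1; funext l
    simp only [mul_diagonal, Matrix.star_apply, star_trivial]
    ring
  have hrow : ∀ j, ∑ l, (W j l)^2 = 1 := by
    intro j
    have h1 : (W * star W) j j = (1 : Matrix (Fin n) (Fin n) ℝ) j j := by rw [hWW]
    rw [Matrix.mul_apply] at h1
    simp only [Matrix.star_apply, star_trivial, Matrix.one_apply_eq] at h1
    rw [← h1]
    congr 1; funext l; ring
  refine ⟨fun j => M j j, ?_, ?_⟩
  · intro i j
    obtain ⟨kmax, -, hkmax⟩ := Finset.exists_max_image Finset.univ e ⟨i, Finset.mem_univ i⟩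
    obtain ⟨kmin, -, hkmin⟩ := Finset.exists_min_image Finset.univ e ⟨i, Finset.mem_univ i⟩
    have hub : ∀ j0, M j0 j0 ≤ e kmax := by
      intro j0
      rw [hs j0]
      calc ∑ l, (W j0 l)^2 * e l ≤ ∑ l, (W j0 l)^2 * e kmax :=
            Finset.sum_le_sum fun l _ => mul_le_mul_of_nonneg_left
              (hkmax l (Finset.mem_univ l)) (sq_nonneg _)
        _ = e kmax := by rw [← Finset.sum_mul, hrow, one_mul]
    have hlb : ∀ j0, e kmin ≤ M j0 j0 := by
      intro j0
      rw [hs j0]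
      calc e kmin = ∑ l, (W j0 l)^2 * e kmin := by rw [← Finset.sum_mul, hrow, one_mul]
        _ ≤ ∑ l, (W j0 l)^2 * e l :=
            Finset.sum_le_sum fun l _ => mul_le_mul_of_nonneg_left
              (hkmin l (Finset.mem_univ l)) (sq_nonneg _)
    have hd : e kmax - e kmin ≤ σ0 := (le_abs_self _).trans (hb kmax kmin)
    rw [abs_sub_le_iff]
    constructor
    · linarith [hub i, hlb j]
    · linarith [hub j, hlb i]
  · have key : star U * p * U = diagonal hp.eigenvalues := by
      rw [hU, ← Unitary.conjStarAlgAut_star_apply (S := ℝ),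
      hp.conjStarAlgAut_star_eigenvectorUnitary, tresca_diag_real]
    have h2 : ∑ i, hp.eigenvalues i * M i i = (diagonal hp.eigenvalues * M).trace := by
      rw [Matrix.trace]
      congr 1; funext i
      rw [Matrix.diag_apply, Matrix.mul_apply]
      rw [Finset.sum_eq_single i (fun b _ hb' => by rw [diagonal_apply_ne _ (Ne.symm hb'), zero_mul])
        (fun h => absurd (Finset.mem_univ i) h)]
      rw [diagonal_apply_eq]
    rw [h2, ← key, hM]
    have hmat : star U * p * U * (star U * σ * U) = star U * (p * (U * star U) * σ * U) := by
      noncomm_ring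
    rw [hmat, hUU', Matrix.mul_one, trace_mul_comm (star U), Matrix.mul_assoc (p * σ), hUU',
      Matrix.mul_one, trace_mul_comm]

end TrescaAux

/-- For the Tresca-type constraint set `K` defined via eigenvalues, the
support function `sup_{σ ∈ K} σ : p` equals the supremum over real tuples
`σ_1,…,σ_d` with `max_{i,j}|σ_i − σ_j| ≤ σ_0` of `Σ_i p_i σ_i`, where `p_1,…,p_d` are
the eigenvalues of `p`; i.e. the support function is computed by simultaneous
diagonalization and pairing of eigenvalues. -/
theorem tresca_support_diagonalization {d : ℕ} (σ0 : ℝ) (hσ0 : 0 ≤ σ0)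
    (p : Matrix (Fin d) (Fin d) ℝ) (hp : p.IsHermitian) :
    sSup {x : ℝ | ∃ σ : Matrix (Fin d) (Fin d) ℝ, ∃ hσ : σ.IsHermitian,
        (∀ i j, |hσ.eigenvalues i - hσ.eigenvalues j| ≤ σ0) ∧ x = (σ * p).trace}
      = sSup {x : ℝ | ∃ s : Fin d → ℝ,
        (∀ i j, |s i - s j| ≤ σ0) ∧ x = ∑ i, hp.eigenvalues i * s i} := by
  congr 1
  ext x
  simp only [Set.mem_setOf_eq]
  constructor
  · rintro ⟨σ, hσ, hbound, rfl⟩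
    obtain ⟨s, hs1, hs2⟩ := tresca_left_to_right σ0 p σ hp hσ hbound
    exact ⟨s, hs1, hs2⟩
  · rintro ⟨s, hbound, rfl⟩
    set U := hp.eigenvectorUnitary with hU
    have hherm : ((U : Matrix (Fin d) (Fin d) ℝ) * diagonal s
        * star (U : Matrix (Fin d) (Fin d) ℝ)).IsHermitian := by
      exact isHermitian_mul_mul_conjTranspose _ (isHermitian_diagonal s)
    refine ⟨_, hherm, ?_, ?_⟩
    · intro i j
      obtain ⟨k, hk⟩ := tresca_eig_conj_diag_mem U s hherm i
      obtain ⟨l, hl⟩ := tresca_eig_conj_diag_mem U s hherm j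
      rw [hk, hl]
      exact hbound k l
    · exact (tresca_trace_conj_diag p hp s).symm
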